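/- Let S be a real symmetric positive definite n×n matrix and T a real skew-symmetric n×n matrix (Tᵀ = −T). Then S − T·S⁻¹·T is symmetric positive definite and det(S + T)² = det(S) · det(S − T·S⁻¹·T); equivalently det(S+T) = det(S)^{1/2} · det(S − T S⁻¹ T)^{1/2}. -/

import Mathlib

open Matrix

lemma skew_quad_zero {n : ℕ} {T : Matrix (Fin n) (Fin n) ℝ} (hT : Tᵀ = -T)
    (x : Fin n → ℝ) : x ⬝ᵥ T *ᵥ x = 0 := by
  have h : x ⬝ᵥ T *ᵥ x = - (x ⬝ᵥ T *ᵥ x) := by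
    conv_lhs => rw [Matrix.dotProduct_mulVec, ← Matrix.transpose_transpose T,
      Matrix.vecMul_transpose, hT]
    simp [Matrix.neg_mulVec, dotProduct_comm]
  linarith

lemma det_pos_of_quad {n : ℕ} (S T : Matrix (Fin n) (Fin n) ℝ)
    (hS : S.PosDef) (hT : Tᵀ = -T) : 0 < (S + T).det := by
  have hq : ∀ (t : ℝ) (x : Fin n → ℝ), x ≠ 0 → 0 < x ⬝ᵥ (S + t • T) *ᵥ x := by
    intro t x hx
    have h1 : 0 < x ⬝ᵥ S *ᵥ x := by
      have := hS.dotProduct_mulVec_pos hx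
      simpa using this
    have h2 : x ⬝ᵥ T *ᵥ x = 0 := skew_quad_zero hT x
    simp [Matrix.add_mulVec, Matrix.smul_mulVec, dotProduct_add,
      dotProduct_smul, h2, h1]
  have hne : ∀ t : ℝ, (S + t • T).det ≠ 0 := by
    intro t h
    obtain ⟨v, hv, hv0⟩ := Matrix.exists_mulVec_eq_zero_iff.2 h
    have := hq t v hv
    rw [hv0] at this
    simp at this
  have hcont : Continuous fun t : ℝ => (S + t • T).det := by
    apply Continuous.matrix_det
    fun_prop
  by_contra hle
  push_neg at hle
  have h1 : (S + (1:ℝ) • T).det < 0 :=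
    lt_of_le_of_ne (by simpa using hle) (by simpa using hne 1)
  have h0 : 0 < (S + (0:ℝ) • T).det := by simpa using hS.det_pos
  have := intermediate_value_Icc' (by norm_num : (0:ℝ) ≤ 1) hcont.continuousOn
  obtain ⟨t, _, ht⟩ := this ⟨le_of_lt h1, le_of_lt h0⟩
  exact hne t ht

/-- For `S` real symmetric positive definite and `T` skew-symmetric,
`S − T·S⁻¹·T` is symmetric positive definite and
`det(S+T)² = det S · det (S − T S⁻¹ T)`; equivalently
`det(S+T) = det(S)^{1/2} · det(S − T S⁻¹ T)^{1/2}`. -/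
theorem stmt7 (n : ℕ) (S T : Matrix (Fin n) (Fin n) ℝ)
    (hS : S.PosDef) (hT : Tᵀ = -T) :
    (S - T * S⁻¹ * T).PosDef ∧
    (S + T).det ^ 2 = S.det * (S - T * S⁻¹ * T).det ∧
    (S + T).det = Real.sqrt S.det * Real.sqrt (S - T * S⁻¹ * T).det := by
  have hSdet : S.det ≠ 0 := hS.det_pos.ne'
  have hSinv : S⁻¹.PosDef := hS.inv
  have hpos : (S - T * S⁻¹ * T).PosDef := by
    have heq : S - T * S⁻¹ * T = S + Tᵀ * S⁻¹ * T := by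
      rw [hT]; noncomm_ring
    rw [heq]
    exact hS.add_posSemidef (by simpa using hSinv.posSemidef.conjTranspose_mul_mul_same T)
  have key : (S + T) * S⁻¹ * (S - T) = S - T * S⁻¹ * T := by
    have h1 : S * S⁻¹ = 1 := Matrix.mul_nonsing_inv S hSdet.isUnit
    have h2 : S⁻¹ * S = 1 := Matrix.nonsing_inv_mul S hSdet.isUnit
    calc (S + T) * S⁻¹ * (S - T) = S * S⁻¹ * S - S * S⁻¹ * T + T * (S⁻¹ * S) - T * S⁻¹ * T := by
          noncomm_ring
      _ = S - T * S⁻¹ * T := by rw [h1, h2]; noncomm_ring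
  have hdetST : (S - T).det = (S + T).det := by
    have hSsym : Sᵀ = S := by simpa using hS.isHermitian.eq
    rw [← Matrix.det_transpose (S - T), Matrix.transpose_sub, hT, hSsym, sub_neg_eq_add]
  have hdet2 : (S + T).det ^ 2 = S.det * (S - T * S⁻¹ * T).det := by
    have := congrArg Matrix.det key
    rw [Matrix.det_mul, Matrix.det_mul, Matrix.det_nonsing_inv, Ring.inverse_eq_inv, hdetST] at this
    field_simp at this ⊢
    rw [sq]
    linarith [this]
  refine ⟨hpos, hdet2, ?_⟩
  have hpos1 : 0 < (S + T).det := det_pos_of_quad S T hS hT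
  rw [← Real.sqrt_mul hS.det_pos.le, ← hdet2, Real.sqrt_sq hpos1.le]
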